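/- For the JWL equation of state with cold pressure h(ρ) = A₁(1 − ωρ/(R₁ρ₀))exp(−R₁ρ₀/ρ) + A₂(1 − ωρ/(R₂ρ₀))exp(−R₂ρ₀/ρ), the second derivative h''(ρ) is nonnegative whenever 0 < ρ ≤ R₁ρ₀/(2 + ω + α), where α = (A₂R₂²/(A₁R₁(R₁−R₂))) exp(((2+ω)(R₁−R₂) − R₂)/R₂). -/

import Mathlib

lemma jwl_core (s q t : ℝ) (hq : 0 < q) :
    (s - q * t) * Real.exp t ≤ q * Real.exp (s / q - 1) := by
  have h := Real.add_one_le_exp (s / q - 1 - t)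
  have h2 : s / q - t ≤ Real.exp (s / q - 1 - t) := by linarith
  have h3 : (s / q - t) * Real.exp t ≤ Real.exp (s / q - 1 - t) * Real.exp t :=
    mul_le_mul_of_nonneg_right h2 (Real.exp_pos t).le
  have h4 : Real.exp (s / q - 1 - t) * Real.exp t = Real.exp (s / q - 1) := by
    rw [← Real.exp_add]; ring_nf
  rw [h4] at h3
  calc (s - q * t) * Real.exp t = q * ((s / q - t) * Real.exp t) := by
        field_simp
    _ ≤ q * Real.exp (s / q - 1) := mul_le_mul_of_nonneg_left h3 hq.le

lemma jwl_key (A1 A2 ω R1 R2 ρ0 ρ : ℝ)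
    (hA1 : 0 < A1) (hA2 : 0 < A2)
    (hR2 : 0 < R2) (hR12 : R2 < R1) (hρ0 : 0 < ρ0) (hρ : 0 < ρ) :
    A2 * (R2 * ρ0) * Real.exp (-(R2 * ρ0 / ρ)) * ((2 + ω) * ρ - R2 * ρ0)
      ≤ A1 * (R1 * ρ0) * Real.exp (-(R1 * ρ0 / ρ)) *
        ((A2 * R2 ^ 2 / (A1 * R1 * (R1 - R2))
            * Real.exp (((2 + ω) * (R1 - R2) - R2) / R2)) * ρ) := by
  have hR1 : 0 < R1 := hR2.trans hR12
  have hB : 0 < R1 - R2 := sub_pos.2 hR12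
  have hcore := jwl_core (2 + ω) (R2 / (R1 - R2)) ((R1 - R2) * ρ0 / ρ) (div_pos hR2 hB)
  have hXY : (2 + ω) / (R2 / (R1 - R2)) - 1 = ((2 + ω) * (R1 - R2) - R2) / R2 := by
    field_simp
  have hqt : R2 / (R1 - R2) * ((R1 - R2) * ρ0 / ρ) = R2 * ρ0 / ρ := by
    field_simp
  rw [hXY, hqt] at hcore
  have hC : (0:ℝ) ≤ A2 * (R2 * ρ0) * ρ * Real.exp (-(R1 * ρ0 / ρ)) := by positivity
  have hmul := mul_le_mul_of_nonneg_left hcore hC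
  have he : Real.exp (-(R1 * ρ0 / ρ)) * Real.exp ((R1 - R2) * ρ0 / ρ)
      = Real.exp (-(R2 * ρ0 / ρ)) := by
    rw [← Real.exp_add]
    congr 1
    field_simp
    ring
  have hL : A2 * (R2 * ρ0) * Real.exp (-(R2 * ρ0 / ρ)) * ((2 + ω) * ρ - R2 * ρ0)
      = (A2 * (R2 * ρ0) * ρ * Real.exp (-(R1 * ρ0 / ρ))) *
        ((2 + ω - R2 * ρ0 / ρ) * Real.exp ((R1 - R2) * ρ0 / ρ)) := by
    rw [← he]
    field_simp
  have hR : (A2 * (R2 * ρ0) * ρ * Real.exp (-(R1 * ρ0 / ρ))) *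
        (R2 / (R1 - R2) * Real.exp (((2 + ω) * (R1 - R2) - R2) / R2))
      = A1 * (R1 * ρ0) * Real.exp (-(R1 * ρ0 / ρ)) *
        ((A2 * R2 ^ 2 / (A1 * R1 * (R1 - R2))
            * Real.exp (((2 + ω) * (R1 - R2) - R2) / R2)) * ρ) := by
    field_simp
  rw [hL, ← hR]
  exact hmul

lemma jwl_d1 (A ω c : ℝ) {r : ℝ} (hr : r ≠ 0) :
    HasDerivAt (fun s : ℝ => A * (1 - ω * s / c) * Real.exp (-(c / s)))
      (A * (-(ω / c)) * Real.exp (-(c / r))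
        + A * (1 - ω * r / c) * (Real.exp (-(c / r)) * (c / r ^ 2))) r := by
  have h1 : HasDerivAt (fun s : ℝ => -(c / s)) (c / r ^ 2) r := by
    have h := ((hasDerivAt_const r c).div (hasDerivAt_id r) hr).neg
    refine h.congr_deriv ?_
    simp [id, neg_div]
  have h2 := h1.exp
  have h3 : HasDerivAt (fun s : ℝ => A * (1 - ω * s / c)) (A * (-(ω / c))) r := by
    have h := ((((hasDerivAt_id r).const_mul ω).div_const c).const_sub 1).const_mul A
    refine h.congr_deriv ?_
    ring
  exact h3.mul h2

lemma jwl_d2 (A ω c : ℝ) (hc : c ≠ 0) {r : ℝ} (hr : r ≠ 0) :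
    HasDerivAt (fun s : ℝ => A * (-(ω / c)) * Real.exp (-(c / s))
        + A * (1 - ω * s / c) * (Real.exp (-(c / s)) * (c / s ^ 2)))
      (A * Real.exp (-(c / r)) * (c / r ^ 4) * (c - (2 + ω) * r)) r := by
  have h1 : HasDerivAt (fun s : ℝ => -(c / s)) (c / r ^ 2) r := by
    have h := ((hasDerivAt_const r c).div (hasDerivAt_id r) hr).neg
    refine h.congr_deriv ?_
    simp [id, neg_div]
  have h2 := h1.exp
  have h3 : HasDerivAt (fun s : ℝ => A * (1 - ω * s / c)) (A * (-(ω / c))) r := by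
    have h := ((((hasDerivAt_id r).const_mul ω).div_const c).const_sub 1).const_mul A
    refine h.congr_deriv ?_
    ring
  have hq : HasDerivAt (fun s : ℝ => c / s ^ 2) (-(2 * c / r ^ 3)) r := by
    have h := (hasDerivAt_const r c).div (hasDerivAt_pow 2 r) (pow_ne_zero 2 hr)
    refine h.congr_deriv ?_
    field_simp
    ring
  have h4 := h2.mul hq
  have h5 := (h2.const_mul (A * (-(ω / c)))).add (h3.mul h4)
  refine h5.congr_deriv ?_
  simp only [Pi.mul_apply]
  field_simp
  ring

/-- for the JWL cold pressure h, h''(ρ) ≥ 0 whenever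
0 < ρ ≤ R₁ρ₀/(2 + ω + α). -/
theorem stmt15 (A1 A2 ω R1 R2 ρ0 : ℝ)
    (hA1 : 0 < A1) (hA2 : 0 < A2) (hω : 0 < ω)
    (hR2 : 0 < R2) (hR12 : R2 < R1) (hρ0 : 0 < ρ0) :
    ∀ ρ : ℝ, 0 < ρ →
      ρ ≤ R1 * ρ0 / (2 + ω + A2 * R2 ^ 2 / (A1 * R1 * (R1 - R2))
            * Real.exp (((2 + ω) * (R1 - R2) - R2) / R2)) →
      0 ≤ deriv (deriv (fun r =>
        A1 * (1 - ω * r / (R1 * ρ0)) * Real.exp (-(R1 * ρ0 / r))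
          + A2 * (1 - ω * r / (R2 * ρ0)) * Real.exp (-(R2 * ρ0 / r)))) ρ := by
  intro ρ hρ hle
  have hR1 : 0 < R1 := hR2.trans hR12
  have hB : 0 < R1 - R2 := sub_pos.2 hR12
  have hc1 : (0:ℝ) < R1 * ρ0 := by positivity
  have hc2 : (0:ℝ) < R2 * ρ0 := by positivity
  set α := A2 * R2 ^ 2 / (A1 * R1 * (R1 - R2))
      * Real.exp (((2 + ω) * (R1 - R2) - R2) / R2) with hαdef
  have hα0 : 0 < α := by
    apply mul_pos _ (Real.exp_pos _)
    exact div_pos (by positivity) (by positivity)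
  have hev : deriv (fun r =>
        A1 * (1 - ω * r / (R1 * ρ0)) * Real.exp (-(R1 * ρ0 / r))
          + A2 * (1 - ω * r / (R2 * ρ0)) * Real.exp (-(R2 * ρ0 / r)))
      =ᶠ[nhds ρ] (fun r =>
        (A1 * (-(ω / (R1 * ρ0))) * Real.exp (-(R1 * ρ0 / r))
          + A1 * (1 - ω * r / (R1 * ρ0)) * (Real.exp (-(R1 * ρ0 / r)) * (R1 * ρ0 / r ^ 2)))
        + (A2 * (-(ω / (R2 * ρ0))) * Real.exp (-(R2 * ρ0 / r))
          + A2 * (1 - ω * r / (R2 * ρ0)) * (Real.exp (-(R2 * ρ0 / r)) * (R2 * ρ0 / r ^ 2)))) := by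
    filter_upwards [isOpen_ne.mem_nhds hρ.ne'] with r hr
    exact ((jwl_d1 A1 ω (R1 * ρ0) hr).add (jwl_d1 A2 ω (R2 * ρ0) hr)).deriv
  erw [hev.deriv_eq,
    ((jwl_d2 A1 ω (R1 * ρ0) hc1.ne' hρ.ne').add (jwl_d2 A2 ω (R2 * ρ0) hc2.ne' hρ.ne')).deriv]
  have key := jwl_key A1 A2 ω R1 R2 ρ0 ρ hA1 hA2 hR2 hR12 hρ0 hρ
  rw [← hαdef] at key
  have hden : (0:ℝ) < 2 + ω + α := by positivity
  have h1 : ρ * (2 + ω + α) ≤ R1 * ρ0 := (le_div_iff₀ hden).1 hle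
  have h2 : α * ρ ≤ R1 * ρ0 - (2 + ω) * ρ := by nlinarith
  have h3 : A1 * (R1 * ρ0) * Real.exp (-(R1 * ρ0 / ρ)) * (α * ρ)
      ≤ A1 * (R1 * ρ0) * Real.exp (-(R1 * ρ0 / ρ)) * (R1 * ρ0 - (2 + ω) * ρ) :=
    mul_le_mul_of_nonneg_left h2 (by positivity)
  have hneg : A2 * (R2 * ρ0) * Real.exp (-(R2 * ρ0 / ρ)) * (R2 * ρ0 - (2 + ω) * ρ)
      = -(A2 * (R2 * ρ0) * Real.exp (-(R2 * ρ0 / ρ)) * ((2 + ω) * ρ - R2 * ρ0)) := by ring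
  have hP : 0 ≤ A1 * (R1 * ρ0) * Real.exp (-(R1 * ρ0 / ρ)) * (R1 * ρ0 - (2 + ω) * ρ)
      + A2 * (R2 * ρ0) * Real.exp (-(R2 * ρ0 / ρ)) * (R2 * ρ0 - (2 + ω) * ρ) := by
    rw [hneg]; linarith
  have heq : A1 * Real.exp (-(R1 * ρ0 / ρ)) * (R1 * ρ0 / ρ ^ 4) * (R1 * ρ0 - (2 + ω) * ρ)
      + A2 * Real.exp (-(R2 * ρ0 / ρ)) * (R2 * ρ0 / ρ ^ 4) * (R2 * ρ0 - (2 + ω) * ρ)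
      = (A1 * (R1 * ρ0) * Real.exp (-(R1 * ρ0 / ρ)) * (R1 * ρ0 - (2 + ω) * ρ)
      + A2 * (R2 * ρ0) * Real.exp (-(R2 * ρ0 / ρ)) * (R2 * ρ0 - (2 + ω) * ρ)) / ρ ^ 4 := by
    ring
  rw [heq]
  exact div_nonneg hP (by positivity)
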